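/- arXiv:1912.07866 — 2 statements merged into one kernel-verified Lean document; each statement's English description precedes it below -/
import Mathlib

section
/- Let Ω ⊂ ℝ² be a bounded domain and H ≠ 0. If u ∈ C²(Ω) satisfies the Euclidean constant mean curvature equation div(Du/√(1+|Du|²)) = 2H in Ω, then Ω does not contain the closure of any open disk of radius 1/|H|. -/
set_option autoImplicit false

noncomputable section
open Real Set

abbrev E2 := EuclideanSpace ℝ (Fin 2)

/-- Partial derivative of `u` in the `i`-th coordinate direction. -/
def pd (i : Fin 2) (u : E2 → ℝ) (x : E2) : ℝ :=
  fderiv ℝ u x (EuclideanSpace.single i 1)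

/-- `|Du|²`. -/
def gradSq (u : E2 → ℝ) (x : E2) : ℝ := ∑ i, (pd i u x) ^ 2

/-- Laplacian `Δu`. -/
def lap (u : E2 → ℝ) (x : E2) : ℝ := ∑ i, pd i (pd i u) x

/-- `∑ᵢⱼ Dᵢu Dⱼu Dᵢⱼu`. -/
def crossTerm (u : E2 → ℝ) (x : E2) : ℝ :=
  ∑ i, ∑ j, pd i u x * pd j u x * pd i (pd j u) x

/-- Divergence-form mean curvature operator `div (Du/√(1+ε|Du|²))`. -/
def divMC (ε : ℝ) (u : E2 → ℝ) (x : E2) : ℝ :=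
  ∑ i, pd i (fun y => pd i u y / Real.sqrt (1 + ε * gradSq u y)) x

open MeasureTheory


lemma expNegInvGlue_monotone : Monotone expNegInvGlue := by
  intro x y hxy
  rcases le_or_gt x 0 with hx | hx
  · rw [expNegInvGlue.zero_of_nonpos hx]; exact expNegInvGlue.nonneg y
  · have hy : 0 < y := lt_of_lt_of_le hx hxy
    rw [expNegInvGlue] ; rw [expNegInvGlue]
    rw [if_neg (not_le.2 hx), if_neg (not_le.2 hy)]
    apply Real.exp_le_exp.2
    have : y⁻¹ ≤ x⁻¹ := inv_anti₀ hx hxy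
    linarith

lemma smoothTransition_monotone : Monotone Real.smoothTransition := by
  intro x y hxy
  unfold Real.smoothTransition
  rw [div_le_div_iff₀ (Real.smoothTransition.pos_denom x) (Real.smoothTransition.pos_denom y)]
  have h1 : expNegInvGlue x ≤ expNegInvGlue y := expNegInvGlue_monotone hxy
  have h2 : expNegInvGlue (1 - y) ≤ expNegInvGlue (1 - x) :=
    expNegInvGlue_monotone (by linarith)
  nlinarith [expNegInvGlue.nonneg x, expNegInvGlue.nonneg y, expNegInvGlue.nonneg (1-x),
    expNegInvGlue.nonneg (1-y)]

lemma deriv_nonneg_of_monotone {f : ℝ → ℝ} (hm : Monotone f) (hd : Differentiable ℝ f) (x : ℝ) :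
    0 ≤ deriv f x := by
  have h := (hd x).hasDerivAt
  rw [hasDerivAt_iff_tendsto_slope] at h
  have h' : Filter.Tendsto (slope f x) (nhdsWithin x (Ioi x)) (nhds (deriv f x)) :=
    h.mono_left (nhdsWithin_mono x (fun y hy => by exact ne_of_gt hy))
  refine le_of_tendsto_of_tendsto tendsto_const_nhds h' ?_
  filter_upwards [self_mem_nhdsWithin] with y hy
  rw [slope_def_field]
  have : x < y := hy
  have := hm this.le
  exact div_nonneg (by linarith) (by linarith)

lemma deriv_smoothTransition_nonneg (t : ℝ) : 0 ≤ deriv Real.smoothTransition t :=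
  deriv_nonneg_of_monotone smoothTransition_monotone
    ((Real.smoothTransition.contDiff (n := 1)).differentiable (by norm_num)) t

/-- `C¹` cutoff: equals 1 for `s ≤ A`, 0 for `s ≥ B`. -/
def cut (A B s : ℝ) : ℝ := 1 - Real.smoothTransition ((s - A) / (B - A))

lemma cut_contDiff (A B : ℝ) {n : ℕ∞} : ContDiff ℝ n (cut A B) := by
  unfold cut
  exact contDiff_const.sub (Real.smoothTransition.contDiff.comp
    ((contDiff_id.sub contDiff_const).div_const _))

lemma cut_one {A B s : ℝ} (h : A < B) (hs : s ≤ A) : cut A B s = 1 := by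
  unfold cut
  rw [Real.smoothTransition.zero_of_nonpos (div_nonpos_of_nonpos_of_nonneg (by linarith) (by linarith))]
  ring

lemma cut_zero {A B s : ℝ} (h : A < B) (hs : B ≤ s) : cut A B s = 0 := by
  unfold cut
  rw [Real.smoothTransition.one_of_one_le ((le_div_iff₀ (by linarith)).2 (by linarith))]
  ring

lemma cut_nonneg (A B s : ℝ) : 0 ≤ cut A B s := by
  unfold cut; linarith [Real.smoothTransition.le_one ((s - A) / (B - A))]

lemma cut_le_one (A B s : ℝ) : cut A B s ≤ 1 := by
  unfold cut; linarith [Real.smoothTransition.nonneg ((s - A) / (B - A))]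

lemma cut_hasDerivAt (A B : ℝ) (s : ℝ) :
    HasDerivAt (cut A B) (-(deriv Real.smoothTransition ((s - A) / (B - A)) * (B - A)⁻¹)) s := by
  have h1 : HasDerivAt (fun s : ℝ => (s - A) / (B - A)) ((B - A)⁻¹) s := by
    simpa using ((hasDerivAt_id s).sub_const A).div_const (B - A)
  have h2 : HasDerivAt Real.smoothTransition
      (deriv Real.smoothTransition ((s - A) / (B - A))) ((s - A) / (B - A)) :=
    (((Real.smoothTransition.contDiff (n := 1)).differentiable (by norm_num)) _).hasDerivAt
  have h3 := (hasDerivAt_const s (1:ℝ)).sub (h2.comp s h1); rw [zero_sub] at h3; exact h3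

lemma cut_deriv (A B s : ℝ) :
    deriv (cut A B) s = -(deriv Real.smoothTransition ((s - A) / (B - A)) * (B - A)⁻¹) :=
  (cut_hasDerivAt A B s).deriv

lemma cut_deriv_nonpos {A B : ℝ} (h : A < B) (s : ℝ) : deriv (cut A B) s ≤ 0 := by
  rw [cut_deriv]
  have := deriv_smoothTransition_nonneg ((s - A) / (B - A))
  have : 0 ≤ deriv Real.smoothTransition ((s - A) / (B - A)) * (B - A)⁻¹ :=
    mul_nonneg this (inv_nonneg.2 (by linarith))
  linarith

lemma cut_deriv_eq_zero_of_gt {A B s : ℝ} (h : A < B) (hs : B < s) : deriv (cut A B) s = 0 := by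
  have he : cut A B =ᶠ[nhds s] (fun _ => (0:ℝ)) := by
    filter_upwards [Ioi_mem_nhds hs] with t ht
    exact cut_zero h (le_of_lt ht)
  rw [he.deriv_eq, deriv_const]


/-- the radial bump -/
def rad (c : E2) (A B : ℝ) (x : E2) : ℝ := cut A B (‖x - c‖ ^ 2)

lemma rad_contDiff (c : E2) (A B : ℝ) : ContDiff ℝ 1 (rad c A B) :=
  (cut_contDiff A B).comp (ContDiff.norm_sq (𝕜 := ℝ) (contDiff_id.sub contDiff_const))

lemma rad_hasFDerivAt (c : E2) (A B : ℝ) (x : E2) :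
    HasFDerivAt (rad c A B)
      (deriv (cut A B) (‖x - c‖ ^ 2) • (2 • (innerSL ℝ (x - c)))) x := by
  have h1 : HasFDerivAt (fun y : E2 => y - c) (ContinuousLinearMap.id ℝ E2) x :=
    (hasFDerivAt_id x).sub_const c
  have h2 := h1.norm_sq
  have h3 := (cut_hasDerivAt A B (‖x - c‖ ^ 2)).comp_hasFDerivAt x h2
  rw [cut_deriv]
  rw [show rad c A B = cut A B ∘ fun x => ‖x - c‖ ^ 2 from rfl]; simpa [map_sub, neg_smul] using h3

lemma rad_fderiv (c : E2) (A B : ℝ) (x : E2) :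
    fderiv ℝ (rad c A B) x = deriv (cut A B) (‖x - c‖ ^ 2) • (2 • (innerSL ℝ (x - c))) :=
  (rad_hasFDerivAt c A B x).fderiv

lemma rad_fderiv_norm {A B : ℝ} (h : A < B) (c : E2) (x : E2) :
    ‖fderiv ℝ (rad c A B) x‖ = 2 * ‖x - c‖ * (-(deriv (cut A B) (‖x - c‖ ^ 2))) := by
  rw [rad_fderiv, norm_smul]
  have : (2:ℕ) • (innerSL ℝ (x - c)) = (2:ℝ) • (innerSL ℝ (x - c)) := by
    simp [two_smul]
  rw [this, norm_smul, innerSL_apply_norm]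
  rw [Real.norm_eq_abs, Real.norm_eq_abs, abs_of_nonpos (cut_deriv_nonpos h _)]
  simp
  ring

/-- area of the unit disk (we never need its value). -/
def kap : ℝ := (volume (Metric.ball (0:E2) 1)).toReal

lemma kap_pos : 0 < kap := by
  unfold kap
  have h1 : volume (Metric.ball (0:E2) 1) ≠ 0 :=
    (Metric.measure_ball_pos volume 0 one_pos).ne'
  have h2 : volume (Metric.ball (0:E2) 1) ≠ ⊤ := measure_ball_lt_top.ne
  exact ENNReal.toReal_pos h1 h2

lemma radial_integral (f : ℝ → ℝ) (c : E2) :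
    ∫ x : E2, f (‖x - c‖) = 2 * kap * ∫ r in Ioi (0:ℝ), r * f r := by
  have h1 : ∫ x : E2, f (‖x - c‖) = ∫ x : E2, f ‖x‖ :=
    integral_sub_right_eq_self (fun y : E2 => f ‖y‖) c
  rw [h1, MeasureTheory.integral_fun_norm_addHaar volume f]
  have hd : Module.finrank ℝ E2 = 2 := finrank_euclideanSpace_fin
  rw [hd]
  simp only [nsmul_eq_mul, smul_eq_mul, Nat.cast_ofNat]
  have hco : ∀ y : ℝ, y ^ 1 * f y = y * f y := fun y => by ring
  simp only [hco]
  rw [show volume.real (Metric.ball (0:E2) 1) = kap from rfl]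
  ring

lemma integral_fderiv_rad_le {a b : ℝ} (ha : 0 < a) (hab : a < b) (c : E2) :
    ∫ x : E2, ‖fderiv ℝ (rad c (a^2) (b^2)) x‖ ≤ 2 * kap * b := by
  have hAB : a^2 < b^2 := by nlinarith
  have hb : 0 < b := ha.trans hab
  set D : ℝ → ℝ := deriv (cut (a^2) (b^2)) with hD
  have hDcont : Continuous D := (cut_contDiff (a^2) (b^2) (n := 1)).continuous_deriv le_rfl
  have hDnp : ∀ s, D s ≤ 0 := cut_deriv_nonpos hAB
  have hDzero : ∀ r : ℝ, b < |r| → D (r^2) = 0 := by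
    intro r hr
    apply cut_deriv_eq_zero_of_gt hAB
    have : b < |r| := hr
    nlinarith [abs_nonneg r, sq_abs r]
  -- FTC: ∫_{Ioi 0} -(D(r²)) * (2r) = 1
  have hk : ContDiff ℝ 1 (fun r : ℝ => cut (a^2) (b^2) (r^2)) :=
    (cut_contDiff (a^2) (b^2)).comp (contDiff_id.pow 2)
  have hks : HasCompactSupport (fun r : ℝ => cut (a^2) (b^2) (r^2)) := by
    apply HasCompactSupport.intro (isCompact_Icc (a := -b) (b := b))
    intro r hr
    apply cut_zero hAB
    simp only [mem_Icc, not_and_or, not_le] at hr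
    rcases hr with h | h <;> nlinarith
  have hderiv : ∀ r : ℝ, deriv (fun r : ℝ => cut (a^2) (b^2) (r^2)) r = D (r^2) * (2*r) := by
    intro r
    have hp : HasDerivAt (fun r : ℝ => r^2) (2*r) r := by
      simpa using hasDerivAt_pow 2 r
    have hc : HasDerivAt (cut (a^2) (b^2)) (D (r^2)) (r^2) := by
      rw [hD, cut_deriv]
      exact cut_hasDerivAt _ _ _
    have hcomp := HasDerivAt.comp (h := fun y : ℝ => y^2) r hc hp
    have : (fun r : ℝ => cut (a^2) (b^2) (r^2))
        = (cut (a^2) (b^2)) ∘ (fun r : ℝ => r^2) := rfl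
    rw [this]
    exact hcomp.deriv
  have hft : ∫ r in Ioi (0:ℝ), D (r^2) * (2*r) = -1 := by
    have := HasCompactSupport.integral_Ioi_deriv_eq hk hks 0
    rw [cut_one hAB (by nlinarith)] at this
    calc ∫ r in Ioi (0:ℝ), D (r^2) * (2*r)
        = ∫ r in Ioi (0:ℝ), deriv (fun r : ℝ => cut (a^2) (b^2) (r^2)) r := by
          apply setIntegral_congr_fun measurableSet_Ioi
          intro r _; rw [hderiv]
      _ = -1 := this
  have key1 : ∫ r in Ioi (0:ℝ), -(D (r^2)) * (2*r) = 1 := by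
    have : ∫ r in Ioi (0:ℝ), -(D (r^2) * (2*r)) = 1 := by
      rw [integral_neg, hft]; ring
    simpa [neg_mul] using this
  -- integrability
  have hcont1 : Continuous (fun r : ℝ => r * (2 * r * (-(D (r^2))))) := by fun_prop
  have hcs1 : HasCompactSupport (fun r : ℝ => r * (2 * r * (-(D (r^2))))) := by
    apply HasCompactSupport.intro (isCompact_Icc (a := -b) (b := b))
    intro r hr
    simp only [mem_Icc, not_and_or, not_le] at hr
    have habs : b < |r| := by
      rcases hr with h | h
      · rw [abs_of_neg (by linarith)]; linarith
      · rw [abs_of_pos (by linarith)]; exact h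
    rw [hDzero r habs]; ring
  have hcont2 : Continuous (fun r : ℝ => b * (-(D (r^2)) * (2*r))) := by fun_prop
  have hcs2 : HasCompactSupport (fun r : ℝ => b * (-(D (r^2)) * (2*r))) := by
    apply HasCompactSupport.intro (isCompact_Icc (a := -b) (b := b))
    intro r hr
    simp only [mem_Icc, not_and_or, not_le] at hr
    have habs : b < |r| := by
      rcases hr with h | h
      · rw [abs_of_neg (by linarith)]; linarith
      · rw [abs_of_pos (by linarith)]; exact h
    rw [hDzero r habs]; ring
  have hint1 : IntegrableOn (fun r : ℝ => r * (2 * r * (-(D (r^2))))) (Ioi 0) volume :=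
    (hcont1.integrable_of_hasCompactSupport hcs1).integrableOn
  have hint2 : IntegrableOn (fun r : ℝ => b * (-(D (r^2)) * (2*r))) (Ioi 0) volume :=
    (hcont2.integrable_of_hasCompactSupport hcs2).integrableOn
  have hmono : ∫ r in Ioi (0:ℝ), r * (2 * r * (-(D (r^2))))
      ≤ ∫ r in Ioi (0:ℝ), b * (-(D (r^2)) * (2*r)) := by
    apply setIntegral_mono_on hint1 hint2 measurableSet_Ioi
    intro r hr
    have hr0 : 0 < r := hr
    rcases le_or_gt r b with h | h
    · nlinarith [hDnp (r^2), mul_nonneg (mul_nonneg (sub_nonneg.2 h) hr0.le) (neg_nonneg.2 (hDnp (r^2)))]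
    · rw [hDzero r (by rw [abs_of_pos hr0]; exact h)]; simp
  calc ∫ x : E2, ‖fderiv ℝ (rad c (a^2) (b^2)) x‖
      = ∫ x : E2, (fun r : ℝ => 2 * r * (-(D (r^2)))) (‖x - c‖) := by
        apply integral_congr_ae
        filter_upwards with x
        rw [rad_fderiv_norm hAB c x]
    _ = 2 * kap * ∫ r in Ioi (0:ℝ), r * (2 * r * (-(D (r^2)))) :=
        radial_integral (fun r : ℝ => 2 * r * (-(D (r^2)))) c
    _ ≤ 2 * kap * (b * ∫ r in Ioi (0:ℝ), -(D (r^2)) * (2*r)) := by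
        have hbint : ∫ r in Ioi (0:ℝ), b * (-(D (r^2)) * (2*r))
            = b * ∫ r in Ioi (0:ℝ), -(D (r^2)) * (2*r) := integral_const_mul b _
        rw [← hbint]
        have h2k : (0:ℝ) ≤ 2 * kap := by nlinarith [kap_pos]
        exact mul_le_mul_of_nonneg_left hmono h2k
    _ = 2 * kap * b := by rw [key1]; ring

lemma integral_rad_ge {a b : ℝ} (ha : 0 < a) (hab : a < b) (c : E2) :
    kap * a^2 ≤ ∫ x : E2, rad c (a^2) (b^2) x := by
  have hAB : a^2 < b^2 := by nlinarith
  have hcont : Continuous (rad c (a^2) (b^2)) := (rad_contDiff c _ _).continuous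
  have hcs : HasCompactSupport (rad c (a^2) (b^2)) := by
    apply HasCompactSupport.intro (isCompact_closedBall c b)
    intro x hx
    apply cut_zero hAB
    simp only [Metric.mem_closedBall, dist_eq_norm, not_le] at hx
    nlinarith [norm_nonneg (x - c)]
  have hint : Integrable (rad c (a^2) (b^2)) := hcont.integrable_of_hasCompactSupport hcs
  have h1 : ∫ x in Metric.closedBall c a, rad c (a^2) (b^2) x
      ≤ ∫ x : E2, rad c (a^2) (b^2) x :=
    setIntegral_le_integral hint (Filter.Eventually.of_forall fun x => cut_nonneg _ _ _)
  have h2 : ∫ x in Metric.closedBall c a, rad c (a^2) (b^2) x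
      = ∫ _x in Metric.closedBall c a, (1:ℝ) := by
    apply setIntegral_congr_fun measurableSet_closedBall
    intro x hx
    simp only [Metric.mem_closedBall, dist_eq_norm] at hx
    exact cut_one hAB (by nlinarith [norm_nonneg (x - c)])
  have h4 : volume (Metric.closedBall c a) = ENNReal.ofReal (a^2) * volume (Metric.ball (0:E2) 1) := by
    rw [Measure.addHaar_closedBall volume c ha.le, finrank_euclideanSpace_fin]
  have h3 : ∫ _x in Metric.closedBall c a, (1:ℝ) = kap * a^2 := by
    rw [setIntegral_const, measureReal_def, h4, smul_eq_mul, mul_one, ENNReal.toReal_mul,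
      ENNReal.toReal_ofReal (by positivity)]
    unfold kap; ring
  linarith

set_option maxHeartbeats 1000000 in
/-- If `u` solves the Euclidean CMC equation `div(Du/√(1+|Du|²)) = 2H` with `H ≠ 0` on a
bounded domain `Ω ⊂ ℝ²`, then `Ω` contains no closed disk of radius `1/|H|`. -/
theorem statement_4 (Ω : Set E2) (hΩ : IsOpen Ω) (hconn : IsConnected Ω)
    (hb : Bornology.IsBounded Ω) (H : ℝ) (hH : H ≠ 0)
    (u : E2 → ℝ) (hu : ContDiffOn ℝ 2 u Ω)
    (heq : ∀ x ∈ Ω, divMC 1 u x = 2 * H) :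
    ∀ c : E2, ¬ Metric.closedBall c (1 / |H|) ⊆ Ω := by
  intro c hsub
  have hH' : 0 < |H| := abs_pos.2 hH
  set R : ℝ := 1 / |H| with hRdef
  have hR0 : 0 < R := by positivity
  obtain ⟨δ, hδ0, hδsub⟩ :=
    (isCompact_closedBall c R).exists_cthickening_subset_open hΩ hsub
  have hsub' : Metric.closedBall c (R + δ) ⊆ Ω := by
    have h2 := cthickening_closedBall hδ0.le hR0.le c
    intro x hx
    apply hδsub
    rw [h2, add_comm]
    exact hx
  set a : ℝ := R + δ/4 with hadef
  set b : ℝ := R + δ/2 with hbdef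
  set b₂ : ℝ := R + 3*δ/4 with hb2def
  set b₃ : ℝ := R + 7*δ/8 with hb3def
  have ha0 : 0 < a := by rw [hadef]; linarith
  have hab : a < b := by rw [hadef, hbdef]; linarith
  have hbb2 : b < b₂ := by rw [hbdef, hb2def]; linarith
  have hb2b3 : b₂ < b₃ := by rw [hb2def, hb3def]; linarith
  have hb3lt : b₃ < R + δ := by rw [hb3def]; linarith
  have hb2sq : b₂^2 < b₃^2 := by nlinarith
  have habsq : a^2 < b^2 := by nlinarith
  have hballΩ : Metric.ball c (R+δ) ⊆ Ω := fun x hx => hsub' (Metric.ball_subset_closedBall hx)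
  -- the vector field
  set W : E2 → ℝ := fun x => Real.sqrt (1 + gradSq u x) with hWdef
  set V : Fin 2 → E2 → ℝ := fun i x => pd i u x / W x with hVdef
  set φ : E2 → ℝ := rad c (a^2) (b^2) with hφdef
  set ψ : E2 → ℝ := rad c (b₂^2) (b₃^2) with hψdef
  set G : Fin 2 → E2 → ℝ := fun i x => ψ x * V i x with hGdef
  set e : Fin 2 → E2 := fun i => EuclideanSpace.single i 1 with hedef
  -- basic facts on W, V
  have hgs : ∀ x, 0 ≤ gradSq u x := fun x => Finset.sum_nonneg fun i _ => sq_nonneg _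
  have hW2 : ∀ x, W x ^ 2 = 1 + gradSq u x := fun x => Real.sq_sqrt (by linarith [hgs x])
  have hW1 : ∀ x, 1 ≤ W x := fun x => Real.one_le_sqrt.2 (by linarith [hgs x])
  have hW0 : ∀ x, 0 < W x := fun x => lt_of_lt_of_le one_pos (hW1 x)
  have hgs2 : ∀ x, gradSq u x = pd 0 u x ^ 2 + pd 1 u x ^ 2 := by
    intro x; rw [gradSq, Fin.sum_univ_two]
  have hVsq : ∀ x, (V 0 x)^2 + (V 1 x)^2 ≤ 1 := by
    intro x
    have h0 : (V 0 x)^2 = (pd 0 u x)^2 / (1 + gradSq u x) := by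
      rw [hVdef]; rw [div_pow, hW2 x]
    have h1 : (V 1 x)^2 = (pd 1 u x)^2 / (1 + gradSq u x) := by
      rw [hVdef]; rw [div_pow, hW2 x]
    rw [h0, h1, ← add_div, div_le_one (by linarith [hgs x])]
    rw [← hgs2 x]; linarith [hgs x]
  -- smoothness of V on Ω
  have hfd : ContDiffOn ℝ 1 (fderiv ℝ u) Ω := hu.fderiv_of_isOpen hΩ (by norm_num)
  have hpdcd : ∀ i : Fin 2, ContDiffOn ℝ 1 (fun x => pd i u x) Ω := by
    intro i
    have h := hfd.clm_apply (contDiffOn_const (c := EuclideanSpace.single i (1:ℝ)))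
    exact h
  have hgradcd : ContDiffOn ℝ 1 (fun x => gradSq u x) Ω := by
    have h : ContDiffOn ℝ 1 (fun x => ∑ i : Fin 2, pd i u x ^ 2) Ω :=
      ContDiffOn.sum (fun i _ => (hpdcd i).pow 2)
    exact h
  have hWcd : ContDiffOn ℝ 1 W Ω := by
    have h1 : ContDiffOn ℝ 1 (fun x => 1 + gradSq u x) Ω := contDiffOn_const.add hgradcd
    exact h1.sqrt (fun x _ => by linarith [hgs x])
  have hVcd : ∀ i, ContDiffOn ℝ 1 (V i) Ω :=
    fun i => (hpdcd i).div hWcd (fun x _ => (hW0 x).ne')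
  -- cutoff facts
  have hψ1 : ∀ y ∈ Metric.ball c b₂, ψ y = 1 := by
    intro y hy
    rw [Metric.mem_ball, dist_eq_norm] at hy
    exact cut_one hb2sq (by nlinarith [norm_nonneg (y - c)])
  have hψ0 : ∀ y, b₃ ≤ ‖y - c‖ → ψ y = 0 := by
    intro y hy
    exact cut_zero hb2sq (by nlinarith [norm_nonneg (y - c)])
  have hφ0 : ∀ y, b ≤ ‖y - c‖ → φ y = 0 := by
    intro y hy
    exact cut_zero habsq (by nlinarith [norm_nonneg (y - c)])
  have hφcs : HasCompactSupport φ := by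
    apply HasCompactSupport.intro (isCompact_closedBall c b)
    intro y hy
    rw [Metric.mem_closedBall, dist_eq_norm, not_le] at hy
    exact hφ0 y hy.le
  have hφc1 : ContDiff ℝ 1 φ := rad_contDiff c _ _
  -- G is globally C¹
  have hGc1 : ∀ i, ContDiff ℝ 1 (G i) := by
    intro i
    rw [contDiff_iff_contDiffAt]
    intro x
    rcases lt_or_ge (‖x - c‖) (R + δ) with hx | hx
    · have hxmem : x ∈ Metric.ball c (R + δ) := by
        rw [Metric.mem_ball, dist_eq_norm]; exact hx
      have h1 : ContDiffAt ℝ 1 ψ x := (rad_contDiff c _ _).contDiffAt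
      have h2 : ContDiffAt ℝ 1 (V i) x :=
        (hVcd i).contDiffAt (hΩ.mem_nhds (hballΩ hxmem))
      exact h1.mul h2
    · have hop : IsOpen {y : E2 | b₃ < ‖y - c‖} :=
        isOpen_lt continuous_const ((continuous_id.sub continuous_const).norm)
      have hev : G i =ᶠ[nhds x] (fun _ => (0:ℝ)) := by
        filter_upwards [hop.mem_nhds (show b₃ < ‖x - c‖ by exact lt_of_lt_of_le hb3lt hx)]
          with y hy
        rw [hGdef]
        simp only
        rw [hψ0 y (le_of_lt hy), zero_mul]
      exact contDiffAt_const.congr_of_eventuallyEq hev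
  -- integrability package
  have hφcont : Continuous φ := hφc1.continuous
  have hGcont : ∀ i, Continuous (G i) := fun i => (hGc1 i).continuous
  have hdGcont : ∀ i, Continuous (fun x => fderiv ℝ (G i) x (e i)) := fun i =>
    ((ContinuousLinearMap.apply ℝ ℝ (e i)).continuous).comp ((hGc1 i).continuous_fderiv (by norm_num))
  have hdφcont : ∀ i : Fin 2, Continuous (fun x => fderiv ℝ φ x (e i)) := fun i =>
    ((ContinuousLinearMap.apply ℝ ℝ (e i)).continuous).comp (hφc1.continuous_fderiv (by norm_num))
  have hInt1 : ∀ i, Integrable (fun x => φ x * fderiv ℝ (G i) x (e i)) := fun i =>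
    (hφcont.mul (hdGcont i)).integrable_of_hasCompactSupport (hφcs.mul_right)
  have hInt2 : ∀ i, Integrable (fun x => fderiv ℝ φ x (e i) * G i x) := fun i =>
    ((hdφcont i).mul (hGcont i)).integrable_of_hasCompactSupport
      ((hφcs.fderiv_apply ℝ (e i)).mul_right)
  have hInt3 : ∀ i, Integrable (fun x => φ x * G i x) := fun i =>
    (hφcont.mul (hGcont i)).integrable_of_hasCompactSupport (hφcs.mul_right)
  -- integration by parts
  have hibp : ∀ i : Fin 2,
      ∫ x : E2, φ x * fderiv ℝ (G i) x (e i) = - ∫ x : E2, fderiv ℝ φ x (e i) * G i x :=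
    fun i => integral_mul_fderiv_eq_neg_fderiv_mul_of_integrable (hInt2 i) (hInt1 i) (hInt3 i)
      (fun x _ => hφc1.differentiable (by norm_num) x) (fun x _ => (hGc1 i).differentiable (by norm_num) x)
  -- pointwise divergence identity
  have hsum : ∀ x : E2, φ x * (∑ i : Fin 2, fderiv ℝ (G i) x (e i)) = φ x * (2*H) := by
    intro x
    rcases eq_or_ne (φ x) 0 with h0 | h0
    · rw [h0, zero_mul, zero_mul]
    · have hxb : ‖x - c‖ < b := by
        by_contra hge
        exact h0 (hφ0 x (not_lt.1 hge))
      congr 1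
      have hx2 : ∀ i, fderiv ℝ (G i) x = fderiv ℝ (V i) x := by
        intro i
        apply Filter.EventuallyEq.fderiv_eq
        have hxb2 : x ∈ Metric.ball c b₂ := by
          rw [Metric.mem_ball, dist_eq_norm]; linarith
        filter_upwards [Metric.isOpen_ball.mem_nhds hxb2] with y hy
        rw [hGdef]
        simp only
        rw [hψ1 y hy, one_mul]
      have hxΩ : x ∈ Ω := by
        apply hballΩ
        rw [Metric.mem_ball, dist_eq_norm]; linarith
      have hdiv := heq x hxΩ
      rw [divMC] at hdiv
      calc ∑ i : Fin 2, fderiv ℝ (G i) x (e i)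
          = ∑ i : Fin 2, fderiv ℝ (V i) x (e i) :=
            Finset.sum_congr rfl fun i _ => by rw [hx2 i]
        _ = 2*H := by
            rw [← hdiv]
            apply Finset.sum_congr rfl
            intro i _
            have hfun : (fun y => pd i u y / Real.sqrt (1 + 1 * gradSq u y)) = V i := by
              funext y
              rw [hVdef, hWdef]
              simp only [one_mul]
            rw [pd, hfun, hedef]
  -- sum up
  have hS : (2*H) * ∫ x : E2, φ x = ∑ i : Fin 2, ∫ x : E2, φ x * fderiv ℝ (G i) x (e i) := by
    rw [← integral_finset_sum _ (fun i _ => hInt1 i)]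
    have hcongr : ∀ x : E2, (∑ i : Fin 2, φ x * fderiv ℝ (G i) x (e i)) = φ x * (2*H) := by
      intro x
      rw [← Finset.mul_sum]
      exact hsum x
    rw [integral_congr_ae (Filter.Eventually.of_forall hcongr)]
    rw [integral_mul_const]
    ring
  have hS2 : ∑ i : Fin 2, ∫ x : E2, φ x * fderiv ℝ (G i) x (e i)
      = - ∫ x : E2, ∑ i : Fin 2, fderiv ℝ φ x (e i) * G i x := by
    rw [integral_finset_sum _ (fun i _ => hInt2 i)]
    rw [Fin.sum_univ_two, Fin.sum_univ_two, hibp 0, hibp 1]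
    ring
  -- pointwise bound
  have hψbd : ∀ y, 0 ≤ ψ y ∧ ψ y ≤ 1 := fun y => ⟨cut_nonneg _ _ _, cut_le_one _ _ _⟩
  have hpoint : ∀ x : E2, |∑ i : Fin 2, fderiv ℝ φ x (e i) * G i x| ≤ ‖fderiv ℝ φ x‖ := by
    intro x
    have hv : ∑ i : Fin 2, fderiv ℝ φ x (e i) * G i x
        = fderiv ℝ φ x (G 0 x • e 0 + G 1 x • e 1) := by
      rw [Fin.sum_univ_two, map_add, _root_.map_smul, _root_.map_smul]
      simp only [smul_eq_mul]
      ring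
    rw [hv]
    have hcoord : ∀ j : Fin 2, (G 0 x • e 0 + G 1 x • e 1) j = G j x := by
      intro j
      fin_cases j <;>
        simp [hedef, EuclideanSpace.single_apply]
    have hnv : ‖G 0 x • e 0 + G 1 x • e 1‖ ≤ 1 := by
      rw [EuclideanSpace.norm_eq]
      apply Real.sqrt_le_one.mpr
      rw [Fin.sum_univ_two, hcoord 0, hcoord 1]
      have hg0 : (G 0 x)^2 ≤ (V 0 x)^2 := by
        rw [hGdef]; simp only
        nlinarith [(hψbd x).1, (hψbd x).2, sq_nonneg (V 0 x),
          mul_nonneg (mul_nonneg (sub_nonneg.2 (hψbd x).2)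
            (by linarith [(hψbd x).1] : (0:ℝ) ≤ 1 + ψ x)) (sq_nonneg (V 0 x))]
      have hg1 : (G 1 x)^2 ≤ (V 1 x)^2 := by
        rw [hGdef]; simp only
        nlinarith [(hψbd x).1, (hψbd x).2, sq_nonneg (V 1 x),
          mul_nonneg (mul_nonneg (sub_nonneg.2 (hψbd x).2)
            (by linarith [(hψbd x).1] : (0:ℝ) ≤ 1 + ψ x)) (sq_nonneg (V 1 x))]
      have := hVsq x
      simp only [Real.norm_eq_abs, sq_abs]
      nlinarith
    calc |fderiv ℝ φ x (G 0 x • e 0 + G 1 x • e 1)|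
        ≤ ‖fderiv ℝ φ x‖ * ‖G 0 x • e 0 + G 1 x • e 1‖ := by
          rw [← Real.norm_eq_abs]
          exact (fderiv ℝ φ x).le_opNorm _
      _ ≤ ‖fderiv ℝ φ x‖ := by
          nlinarith [norm_nonneg (fderiv ℝ φ x), hnv]
  -- integral bound
  have hIntSum : Integrable (fun x : E2 => ∑ i : Fin 2, fderiv ℝ φ x (e i) * G i x) := by
    apply integrable_finset_sum
    intro i _
    exact hInt2 i
  have hIntNorm : Integrable (fun x : E2 => ‖fderiv ℝ φ x‖) :=
    ((hφc1.continuous_fderiv (by norm_num)).norm).integrable_of_hasCompactSupport (hφcs.fderiv ℝ).norm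
  have hup0 : |∫ x : E2, ∑ i : Fin 2, fderiv ℝ φ x (e i) * G i x|
      ≤ ∫ x : E2, ‖fderiv ℝ φ x‖ := by
    calc |∫ x : E2, ∑ i : Fin 2, fderiv ℝ φ x (e i) * G i x|
        ≤ ∫ x : E2, |∑ i : Fin 2, fderiv ℝ φ x (e i) * G i x| := by
          rw [← Real.norm_eq_abs]
          exact (norm_integral_le_integral_norm _).trans (le_of_eq (by simp [Real.norm_eq_abs]))
      _ ≤ ∫ x : E2, ‖fderiv ℝ φ x‖ :=
          integral_mono hIntSum.abs hIntNorm (fun x => hpoint x)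
  -- conclude
  have hlow : kap * a^2 ≤ ∫ x : E2, φ x := integral_rad_ge ha0 hab c
  have hup : ∫ x : E2, ‖fderiv ℝ φ x‖ ≤ 2*kap*b := integral_fderiv_rad_le ha0 hab c
  have hφint : (0:ℝ) ≤ ∫ x : E2, φ x := le_trans (by nlinarith [kap_pos]) hlow
  have hkey : 2 * |H| * (∫ x : E2, φ x) ≤ 2*kap*b := by
    have h1 : |(2*H) * ∫ x : E2, φ x| ≤ 2*kap*b := by
      rw [hS, hS2, abs_neg]
      exact hup0.trans hup
    rw [abs_mul, abs_mul] at h1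
    rw [abs_of_nonneg hφint] at h1
    have : |(2:ℝ)| = 2 := by norm_num
    rw [this] at h1
    linarith
  have hfinal : |H| * a^2 ≤ b := by
    have h2 : 2 * |H| * (kap * a^2) ≤ 2*kap*b := by
      have := mul_le_mul_of_nonneg_left hlow (by positivity : (0:ℝ) ≤ 2 * |H|)
      linarith
    nlinarith [kap_pos]
  have hHR : |H| * R = 1 := by
    rw [hRdef]
    field_simp
  have ha2 : a^2 ≤ R * b := by
    nlinarith [mul_le_mul_of_nonneg_right hfinal hR0.le, hHR, sq_nonneg a]
  rw [hadef, hbdef] at ha2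
  nlinarith [hδ0, hR0]
end
end

section
/- Lorentzian height estimate via cylinders: if u solves div(Du/√(1−|Du|²)) = 2H, |Du| < 1, in a bounded domain Ω ⊂ ℝ² with u = 0 on ∂Ω and H ≠ 0, then sup_Ω |u| ≤ (1/(2|H|))(√(1 + Θ(Ω)²H²) − 1), where Θ(Ω) is the width of the narrowest strip containing Ω. -/
set_option autoImplicit false

noncomputable section
open Real Set

/-- The set of widths of strips (regions between two parallel lines) containing `A`. -/
def stripWidths (A : Set E2) : Set ℝ :=
  {w : ℝ | 0 ≤ w ∧ ∃ a : E2, ‖a‖ = 1 ∧ ∃ b : ℝ, ∀ x ∈ A, b ≤ inner ℝ a x ∧ (inner ℝ a x : ℝ) ≤ b + w}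

/-- `Θ(A)`: the width of the narrowest strip containing `A`. -/
def Theta (A : Set E2) : ℝ := sInf (stripWidths A)

open Filter Topology

private def ee (i : Fin 2) : E2 := EuclideanSpace.single i 1
lemma sum_single_eq (x : E2) : ∑ i, x i • ee i = x := by
  ext j
  fin_cases j <;>
    simp [ee, Fin.sum_univ_two, EuclideanSpace.single_apply, PiLp.add_apply, PiLp.smul_apply]
lemma secondDerivTest {g g' : ℝ → ℝ} {c : ℝ}
    (hmax : IsLocalMax g 0)
    (hd : ∀ᶠ t in 𝓝 (0:ℝ), HasDerivAt g (g' t) t)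
    (hd2 : HasDerivAt g' c 0) : c ≤ 0 := by
  by_contra hc
  push_neg at hc
  have h0 : g' 0 = 0 := hmax.hasDerivAt_eq_zero hd.self_of_nhds
  have hslope : ∀ᶠ t in 𝓝[>] (0:ℝ), 0 < g' t := by
    have hs := hasDerivAt_iff_tendsto_slope.1 hd2
    have h2 : ∀ᶠ t in 𝓝[≠] (0:ℝ), c/2 < slope g' 0 t :=
      hs.eventually (eventually_gt_nhds (by linarith))
    have h3 : 𝓝[>] (0:ℝ) ≤ 𝓝[≠] (0:ℝ) :=
      nhdsWithin_mono _ (fun t ht => ne_of_gt ht)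
    filter_upwards [h3 h2, self_mem_nhdsWithin] with t ht ht0
    have hst : slope g' 0 t = g' t / t := by simp [slope_def_field, h0]
    rw [hst] at ht
    have : 0 < g' t / t := lt_trans (by linarith) ht
    exact (div_pos_iff.1 this).elim (fun h => h.1)
      (fun h => absurd ht0 (not_lt.2 h.2.le))
  rw [eventually_nhdsWithin_iff] at hslope
  obtain ⟨δ, hδ, hall⟩ := Metric.eventually_nhds_iff.1 (hd.and (hmax.and hslope))
  set s := δ/2 with hs
  have hsδ : ∀ t ∈ Icc (0:ℝ) s, dist t 0 < δ := by
    intro t ht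
    rw [Real.dist_eq, sub_zero, abs_of_nonneg ht.1]
    calc t ≤ s := ht.2
    _ < δ := by rw [hs]; linarith
  have hmono : StrictMonoOn g (Icc 0 s) := by
    apply strictMonoOn_of_deriv_pos (convex_Icc 0 s)
    · intro t ht
      exact ((hall (hsδ t ht)).1.differentiableAt).continuousAt.continuousWithinAt
    · intro t ht
      rw [interior_Icc] at ht
      have hd' := (hall (hsδ t ⟨ht.1.le, ht.2.le⟩)).1
      rw [hd'.deriv]
      exact (hall (hsδ t ⟨ht.1.le, ht.2.le⟩)).2.2 ht.1
  have hs0 : (0:ℝ) < s := by rw [hs]; linarith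
  have hlt := hmono (left_mem_Icc.2 hs0.le) (right_mem_Icc.2 hs0.le) hs0
  exact absurd hlt (not_lt.2 (hall (hsδ s (right_mem_Icc.2 hs0.le))).2.1)

lemma pd_pd_eq {h : E2 → ℝ} {z : E2} (hF : DifferentiableAt ℝ (fderiv ℝ h) z) (i j : Fin 2) :
    pd i (pd j h) z = fderiv ℝ (fderiv ℝ h) z (ee i) (ee j) := by
  have h1 : HasFDerivAt (fun y => fderiv ℝ h y (ee j))
      ((fderiv ℝ h z).comp (0 : E2 →L[ℝ] E2) + (fderiv ℝ (fderiv ℝ h) z).flip (ee j)) z :=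
    hF.hasFDerivAt.clm_apply (hasFDerivAt_const (ee j) z)
  have h2 : pd j h = fun y => fderiv ℝ h y (ee j) := rfl
  rw [pd, h2, h1.fderiv]
  simp [ee]

lemma clm_expand (L : E2 →L[ℝ] ℝ) (x : E2) : L x = ∑ j, x j * L (ee j) := by
  conv_lhs => rw [← sum_single_eq x]
  rw [map_sum]
  exact Finset.sum_congr rfl fun j _ => by rw [map_smul]; simp

lemma bilin_expand (A : E2 →L[ℝ] E2 →L[ℝ] ℝ) (v : E2) :
    A v v = ∑ i, ∑ j, v i * v j * A (ee i) (ee j) := by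
  have h1 : A v v = (A.flip v) v := rfl
  rw [h1, clm_expand (A.flip v) v]
  refine Finset.sum_congr rfl fun i _ => ?_
  have h2 : A.flip v (ee i) = A (ee i) v := rfl
  rw [h2, clm_expand (A (ee i)) v, Finset.mul_sum]
  exact Finset.sum_congr rfl fun j _ => by ring

lemma q_nonpos {h : E2 → ℝ} {Ω : Set E2} (hΩ : IsOpen Ω) {z : E2} (hz : z ∈ Ω)
    (hh : ContDiffOn ℝ 2 h Ω) (hmax : IsLocalMax h z) (v : E2) :
    ∑ i, ∑ j, v i * v j * pd i (pd j h) z ≤ 0 := by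
  have hhz : ContDiffAt ℝ 2 h z := hh.contDiffAt (hΩ.mem_nhds hz)
  have hF : ContDiffAt ℝ 1 (fderiv ℝ h) z := hhz.fderiv_right (by norm_num)
  have hFd : DifferentiableAt ℝ (fderiv ℝ h) z := hF.differentiableAt one_ne_zero
  set c : ℝ → E2 := fun t => z + t • v with hc
  have hc0 : c 0 = z := by simp [hc]
  have hcd : ∀ t : ℝ, HasDerivAt c v t := by
    intro t
    have h := (HasDerivAt.const_add z ((hasDerivAt_id t).smul_const v))
    rw [one_smul] at h
    exact h
  have hccont : Continuous c := continuous_const.add (continuous_id.smul continuous_const)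
  have hT : Tendsto c (𝓝 0) (𝓝 z) := by rw [← hc0]; exact hccont.continuousAt
  have hev : ∀ᶠ t in 𝓝 (0:ℝ), c t ∈ Ω := hT.eventually (hΩ.mem_nhds hz)
  set g' : ℝ → ℝ := fun t => fderiv ℝ h (c t) v with hg'
  have hd : ∀ᶠ t in 𝓝 (0:ℝ), HasDerivAt (fun t => h (c t)) (g' t) t := by
    filter_upwards [hev] with t ht
    have hdiff : DifferentiableAt ℝ h (c t) :=
      (hh.contDiffAt (hΩ.mem_nhds ht)).differentiableAt (by norm_num)
    exact hdiff.hasFDerivAt.comp_hasDerivAt t (hcd t)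
  have hmax' : IsLocalMax (fun t => h (c t)) 0 := by
    filter_upwards [hT.eventually hmax] with t ht
    simpa [hc0] using ht
  have hd2 : HasDerivAt g' (fderiv ℝ (fderiv ℝ h) z v v) 0 := by
    have hfd : HasFDerivAt (fderiv ℝ h) (fderiv ℝ (fderiv ℝ h) z) (c 0) := by
      rw [hc0]; exact hFd.hasFDerivAt
    have h1 := hfd.comp_hasDerivAt 0 (hcd 0)
    have h2 := (ContinuousLinearMap.apply ℝ ℝ v).hasFDerivAt.comp_hasDerivAt 0 h1
    exact h2
  have hq := secondDerivTest hmax' hd hd2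
  rw [bilin_expand] at hq
  calc ∑ i, ∑ j, v i * v j * pd i (pd j h) z
      = ∑ i, ∑ j, v i * v j * fderiv ℝ (fderiv ℝ h) z (ee i) (ee j) := by
        exact Finset.sum_congr rfl fun i _ => Finset.sum_congr rfl fun j _ => by
          rw [pd_pd_eq hFd]
    _ ≤ 0 := hq

lemma divMC_expand {w : E2 → ℝ} {z : E2} {Ω : Set E2} (hΩ : IsOpen Ω) (hz : z ∈ Ω)
    (hw : ContDiffOn ℝ 2 w Ω) (hg : gradSq w z < 1) :
    divMC (-1) w z = lap w z / Real.sqrt (1 - gradSq w z)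
      + crossTerm w z / (Real.sqrt (1 - gradSq w z))^3 := by
  have hwz : ContDiffAt ℝ 2 w z := hw.contDiffAt (hΩ.mem_nhds hz)
  have hF : ContDiffAt ℝ 1 (fderiv ℝ w) z := hwz.fderiv_right (by norm_num)
  have hFd : DifferentiableAt ℝ (fderiv ℝ w) z := hF.differentiableAt one_ne_zero
  set G := fderiv ℝ (fderiv ℝ w) z with hG
  set p : Fin 2 → ℝ := fun j => pd j w z with hp
  set A : Fin 2 → Fin 2 → ℝ := fun i j => pd i (pd j w) z with hA
  have hAG : ∀ i j, G (ee i) (ee j) = A i j := fun i j => (pd_pd_eq hFd i j).symm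
  have hj : ∀ j, HasFDerivAt (pd j w) (G.flip (ee j)) z := by
    intro j
    have := hFd.hasFDerivAt.clm_apply (hasFDerivAt_const (ee j) z)
    simp at this
    exact this
  set Gg : E2 →L[ℝ] ℝ := ∑ j, (2 * p j) • G.flip (ee j) with hGg
  have hGrad : HasFDerivAt (gradSq w) Gg z := by
    have hsq : ∀ j : Fin 2, HasFDerivAt (fun y => (pd j w y)^2) ((2 * p j) • G.flip (ee j)) z := by
      intro j
      have hm := (hj j).mul (hj j)
      have hfun : (fun y => (pd j w y)^2) = fun y => pd j w y * pd j w y := by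
        funext y; ring
      rw [hfun]
      rw [two_mul, add_smul]
      exact hm
    have := HasFDerivAt.sum (fun j (_ : j ∈ Finset.univ) => hsq j)
    exact this
  set g0 := gradSq w z with hg0
  have hpos : (0:ℝ) < 1 + (-1) * g0 := by simp only [neg_one_mul]; linarith
  set W := Real.sqrt (1 + (-1) * g0) with hW
  have hWpos : 0 < W := Real.sqrt_pos.2 hpos
  have hWne : W ≠ 0 := ne_of_gt hWpos
  have hinner : HasFDerivAt (fun y => 1 + (-1) * gradSq w y) ((-1 : ℝ) • Gg) z :=
    (hGrad.const_mul (-1)).const_add 1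
  have hq : HasFDerivAt (fun y => Real.sqrt (1 + (-1) * gradSq w y))
      ((1/(2*W)) • ((-1 : ℝ) • Gg)) z := hinner.sqrt (ne_of_gt hpos)
  have hqinv : HasFDerivAt (fun y => (Real.sqrt (1 + (-1) * gradSq w y))⁻¹)
      ((-(W^2)⁻¹) • ((1/(2*W)) • ((-1 : ℝ) • Gg))) z := by
    have := (hasDerivAt_inv hWne).comp_hasFDerivAt z hq
    exact this
  have hterm : ∀ i : Fin 2, pd i (fun y => pd i w y / Real.sqrt (1 + (-1) * gradSq w y)) z
      = A i i / W + (∑ j, p i * p j * A i j) / W^3 := by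
    intro i
    have hfun : (fun y => pd i w y / Real.sqrt (1 + (-1) * gradSq w y))
        = fun y => pd i w y * (Real.sqrt (1 + (-1) * gradSq w y))⁻¹ := by
      funext y; rw [div_eq_mul_inv]
    have hmul : HasFDerivAt (fun y => pd i w y * (Real.sqrt (1 + (-1) * gradSq w y))⁻¹) _ z :=
      (hj i).mul hqinv
    rw [pd, hfun, hmul.fderiv]
    have hWval : (Real.sqrt (1 + (-1) * gradSq w z))⁻¹ = W⁻¹ := by rw [hW, hg0]
    simp only [ContinuousLinearMap.add_apply, ContinuousLinearMap.smul_apply,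
      ContinuousLinearMap.coe_sum', Finset.sum_apply, smul_eq_mul, hGg]
    have hflip : ∀ j, G.flip (ee j) (EuclideanSpace.single i (1:ℝ)) = A i j := fun j => hAG i j
    simp only [hflip, hWval]
    have hpi : pd i w z = p i := rfl
    rw [hpi]
    set T := ∑ j, p j * A i j with hT
    have hS1 : ∑ j, 2 * p j * A i j = 2 * T := by
      rw [hT, Finset.mul_sum]
      exact Finset.sum_congr rfl fun j _ => by ring
    have hS2 : ∑ j, p i * p j * A i j = p i * T := by
      rw [hT, Finset.mul_sum]
      exact Finset.sum_congr rfl fun j _ => by ring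
    rw [hS1, hS2]
    field_simp
    ring
  have hsum := Finset.sum_congr rfl (fun i (_ : i ∈ Finset.univ) => hterm i)
  have hdiv : divMC (-1) w z = ∑ i, (A i i / W + (∑ j, p i * p j * A i j) / W^3) := by
    rw [divMC]
    convert hsum using 2
  rw [hdiv, Finset.sum_add_distrib, ← Finset.sum_div, ← Finset.sum_div]
  have hWeq : W = Real.sqrt (1 - gradSq w z) := by rw [hW, hg0]; ring_nf
  rw [← hWeq, lap, crossTerm]

def sfun (a : E2) (m : ℝ) : E2 → ℝ := fun y => (inner ℝ a y : ℝ) - m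

def phi (a : E2) (m C r : ℝ) : E2 → ℝ := fun y => C - Real.sqrt (r^2 + (sfun a m y)^2)

lemma sum_sq_a {a : E2} (ha : ‖a‖ = 1) : ∑ i, (a i)^2 = 1 := by
  have h := congrArg (fun t => t^2) ha
  simp only [one_pow] at h
  rw [← h, EuclideanSpace.norm_eq, Real.sq_sqrt (by positivity)]
  exact Finset.sum_congr rfl fun i _ => by rw [Real.norm_eq_abs, sq_abs]

lemma sfun_hasFDerivAt (a : E2) (m : ℝ) (x : E2) :
    HasFDerivAt (sfun a m) (innerSL ℝ a) x :=
  ((innerSL ℝ a).hasFDerivAt).sub_const m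

lemma rsq_pos {r : ℝ} (hr : 0 < r) (s : ℝ) : (0:ℝ) < r^2 + s^2 := by
  have := pow_pos hr 2
  nlinarith [sq_nonneg s]

lemma phi_hasFDerivAt {a : E2} {r : ℝ} (m C : ℝ) (hr : 0 < r) (x : E2) :
    HasFDerivAt (phi a m C r)
      ((-(sfun a m x / Real.sqrt (r^2 + (sfun a m x)^2))) • innerSL ℝ a) x := by
  have hs := sfun_hasFDerivAt a m x
  have hg : HasFDerivAt (fun y => r^2 + (sfun a m y)^2)
      ((2 * sfun a m x) • innerSL ℝ a) x := by
    have h2 : HasFDerivAt (fun y => (sfun a m y)^2)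
        ((2 * sfun a m x) • innerSL ℝ a) x := by
      have := hs.mul hs
      have hfun : (fun y => (sfun a m y)^2) = fun y => sfun a m y * sfun a m y := by
        funext y; ring
      rw [hfun]
      rw [two_mul, add_smul]
      exact this
    exact h2.const_add (r^2)
  have hpos := rsq_pos hr (sfun a m x)
  have hsq := hg.sqrt (ne_of_gt hpos)
  have hphi := hsq.const_sub C
  have heq : phi a m C r = fun y => C - Real.sqrt (r^2 + (sfun a m y)^2) := rfl
  have h0 : Real.sqrt (r^2 + (sfun a m x)^2) ≠ 0 := Real.sqrt_ne_zero'.2 hpos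
  have hcoef : (-(sfun a m x / Real.sqrt (r^2 + (sfun a m x)^2))) • (innerSL ℝ a : E2 →L[ℝ] ℝ)
      = -((1 / (2 * Real.sqrt (r^2 + (sfun a m x)^2))) • (2 * sfun a m x) • (innerSL ℝ a : E2 →L[ℝ] ℝ)) := by
    rw [smul_smul, ← neg_smul]
    congr 1
    field_simp
  rw [heq, hcoef]
  exact hphi

lemma pd_phi {a : E2} {r : ℝ} (m C : ℝ) (hr : 0 < r) (i : Fin 2) (x : E2) :
    pd i (phi a m C r) x = -(sfun a m x / Real.sqrt (r^2 + (sfun a m x)^2)) * a i := by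
  rw [pd, (phi_hasFDerivAt m C hr x).fderiv]
  simp only [ContinuousLinearMap.smul_apply, smul_eq_mul, innerSL_apply_apply]
  congr 1
  rw [EuclideanSpace.inner_single_right]
  simp

lemma gradSq_phi {a : E2} {r : ℝ} (m C : ℝ) (ha : ‖a‖ = 1) (hr : 0 < r) (x : E2) :
    gradSq (phi a m C r) x = (sfun a m x)^2 / (r^2 + (sfun a m x)^2) := by
  rw [gradSq]
  have h1 : ∀ i : Fin 2, (pd i (phi a m C r) x)^2
      = (sfun a m x)^2 / (r^2 + (sfun a m x)^2) * (a i)^2 := by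
    intro i
    rw [pd_phi m C hr i x, mul_pow, neg_pow, div_pow,
      Real.sq_sqrt (rsq_pos hr (sfun a m x)).le]
    ring
  rw [Finset.sum_congr rfl fun i _ => h1 i, ← Finset.mul_sum, sum_sq_a ha, mul_one]

lemma gradSq_phi_lt {a : E2} {r : ℝ} (m C : ℝ) (ha : ‖a‖ = 1) (hr : 0 < r) (x : E2) :
    gradSq (phi a m C r) x < 1 := by
  rw [gradSq_phi m C ha hr x]
  have hpos := rsq_pos hr (sfun a m x)
  rw [div_lt_one hpos]
  nlinarith [pow_pos hr 2]

lemma psi_phi_eq {a : E2} {r : ℝ} (m C : ℝ) (ha : ‖a‖ = 1) (hr : 0 < r) (i : Fin 2) :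
    (fun y => pd i (phi a m C r) y / Real.sqrt (1 + (-1) * gradSq (phi a m C r) y))
      = fun y => (-(a i / r)) * sfun a m y := by
  funext y
  have hpos := rsq_pos hr (sfun a m y)
  have h0 : Real.sqrt (r^2 + (sfun a m y)^2) ≠ 0 := Real.sqrt_ne_zero'.2 hpos
  have hden : (1 + (-1) * gradSq (phi a m C r) y) = r^2 / (r^2 + (sfun a m y)^2) := by
    rw [gradSq_phi m C ha hr y]
    field_simp
    ring
  rw [pd_phi m C hr i y, hden, Real.sqrt_div (by positivity), Real.sqrt_sq hr.le]
  field_simp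

lemma divMC_phi {a : E2} {r : ℝ} (m C : ℝ) (ha : ‖a‖ = 1) (hr : 0 < r) (x : E2) :
    divMC (-1) (phi a m C r) x = -(1/r) := by
  rw [divMC]
  have hterm : ∀ i : Fin 2, pd i
      (fun y => pd i (phi a m C r) y / Real.sqrt (1 + (-1) * gradSq (phi a m C r) y)) x
      = -((a i)^2 / r) := by
    intro i
    rw [psi_phi_eq m C ha hr i, pd]
    have hd : HasFDerivAt (fun y => (-(a i / r)) * sfun a m y)
        ((-(a i / r)) • innerSL ℝ a) x := (sfun_hasFDerivAt a m x).const_mul _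
    rw [hd.fderiv]
    simp only [ContinuousLinearMap.smul_apply, smul_eq_mul, innerSL_apply_apply]
    rw [EuclideanSpace.inner_single_right]
    simp
    ring
  rw [Finset.sum_congr rfl fun i _ => hterm i]
  simp only [← neg_div]
  rw [← Finset.sum_div]
  have h1 : ∑ x : Fin 2, -a x ^2 = -1 := by
    have := sum_sq_a ha
    rw [Fin.sum_univ_two] at this ⊢
    linarith
  rw [h1]

lemma contDiff_phi {a : E2} {r : ℝ} (m C : ℝ) (hr : 0 < r) :
    ContDiff ℝ 2 (phi a m C r) := by
  rw [contDiff_iff_contDiffAt]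
  intro x
  have hsf : ContDiff ℝ 2 (sfun a m) := ((innerSL ℝ a).contDiff).sub contDiff_const
  have hmul : ContDiff ℝ 2 (fun y => (sfun a m y)^2) := by
    have h2 : (fun y => (sfun a m y)^2) = fun y => sfun a m y * sfun a m y := by
      funext y; ring
    rw [h2]; exact hsf.mul hsf
  have hg : ContDiff ℝ 2 (fun y => r^2 + (sfun a m y)^2) := contDiff_const.add hmul
  have hs : ContDiffAt ℝ 2 Real.sqrt (r^2 + (sfun a m x)^2) :=
    Real.contDiffAt_sqrt (ne_of_gt (rsq_pos hr (sfun a m x)))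
  have hcomp : ContDiffAt ℝ 2 (fun y => Real.sqrt (r^2 + (sfun a m y)^2)) x :=
    hs.comp x hg.contDiffAt
  exact contDiffAt_const.sub hcomp

lemma pd_differentiableAt {w : E2 → ℝ} {z : E2} (hw : ContDiffAt ℝ 2 w z) (j : Fin 2) :
    DifferentiableAt ℝ (pd j w) z := by
  have hFd : DifferentiableAt ℝ (fderiv ℝ w) z :=
    (hw.fderiv_right (m := 1) (by norm_num)).differentiableAt one_ne_zero
  exact hFd.clm_apply (differentiableAt_const _)

lemma q_single (M : Fin 2 → Fin 2 → ℝ) (k : Fin 2) :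
    ∑ i, ∑ j, (ee k) i * (ee k) j * M i j = M k k := by
  fin_cases k <;> simp [ee, EuclideanSpace.single_apply, Fin.sum_univ_two]

lemma comparison {Ω : Set E2} (hΩ : IsOpen Ω) (hne : Ω.Nonempty) (hb : Bornology.IsBounded Ω)
    {H : ℝ} {u : E2 → ℝ}
    (hu : ContDiffOn ℝ 2 u Ω) (hc : ContinuousOn u (closure Ω))
    (hsp : ∀ x ∈ Ω, gradSq u x < 1)
    (hbd : ∀ x ∈ frontier Ω, u x = 0)
    (heq : ∀ x ∈ Ω, divMC (-1) u x = 2 * H)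
    {a : E2} (ha : ‖a‖ = 1) {b w : ℝ} (hw : 0 ≤ w)
    (hstrip : ∀ x ∈ Ω, b ≤ (inner ℝ a x : ℝ) ∧ (inner ℝ a x : ℝ) ≤ b + w)
    {r : ℝ} (hr : 0 < r) (hHr : -(1/r) < 2 * H) :
    ∀ x ∈ Ω, u x ≤ Real.sqrt (r^2 + (w/2)^2) - r := by
  set m : ℝ := b + w/2 with hm
  set C : ℝ := Real.sqrt (r^2 + (w/2)^2) with hC
  set φ : E2 → ℝ := phi a m C r with hφ
  have hφCD : ContDiff ℝ 2 φ := contDiff_phi m C hr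
  -- strip bounds on closure
  have hstripc : ∀ x ∈ closure Ω, b ≤ (inner ℝ a x : ℝ) ∧ (inner ℝ a x : ℝ) ≤ b + w := by
    have hcl : IsClosed {x : E2 | b ≤ (inner ℝ a x : ℝ) ∧ (inner ℝ a x : ℝ) ≤ b + w} := by
      have hcont : Continuous (fun x : E2 => (inner ℝ a x : ℝ)) := (innerSL ℝ a).continuous
      exact (isClosed_le continuous_const hcont).inter (isClosed_le hcont continuous_const)
    exact fun x hx => closure_minimal (fun y hy => hstrip y hy) hcl hx
  have hsbound : ∀ x ∈ closure Ω, (sfun a m x)^2 ≤ (w/2)^2 := by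
    intro x hx
    obtain ⟨h1, h2⟩ := hstripc x hx
    have : |sfun a m x| ≤ w/2 := by
      rw [abs_le]
      constructor <;> simp only [sfun, hm] <;> linarith
    calc (sfun a m x)^2 = |sfun a m x|^2 := (sq_abs _).symm
      _ ≤ (w/2)^2 := by nlinarith [abs_nonneg (sfun a m x)]
  have hφ0 : ∀ x ∈ closure Ω, 0 ≤ φ x := by
    intro x hx
    have h1 : Real.sqrt (r^2 + (sfun a m x)^2) ≤ C := by
      rw [hC]
      exact Real.sqrt_le_sqrt (by linarith [hsbound x hx])
    simp only [hφ, phi]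
    linarith
  have hφC : ∀ x : E2, φ x ≤ C - r := by
    intro x
    have h1 : r ≤ Real.sqrt (r^2 + (sfun a m x)^2) := by
      have h2 := Real.sqrt_le_sqrt (show r^2 ≤ r^2 + (sfun a m x)^2 by nlinarith [sq_nonneg (sfun a m x)])
      rwa [Real.sqrt_sq hr.le] at h2
    simp only [hφ, phi]
    linarith
  -- max of u - φ on closure
  have hK : IsCompact (closure Ω) := hb.isCompact_closure
  have hgcont : ContinuousOn (fun y => u y - φ y) (closure Ω) :=
    hc.sub (hφCD.continuous.continuousOn)
  obtain ⟨z, hzK, hzmax⟩ := hK.exists_isMaxOn (hne.mono subset_closure) hgcont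
  by_cases hcase : u z - φ z ≤ 0
  · intro x hx
    have h2 : u x - φ x ≤ u z - φ z := hzmax (subset_closure hx)
    have hφx := hφC x
    linarith
  · exfalso
    push_neg at hcase
    have hzΩ : z ∈ Ω := by
      by_contra hzn
      have hzf : z ∈ frontier Ω := by
        rw [hΩ.frontier_eq]
        exact ⟨hzK, hzn⟩
      have := hbd z hzf
      have := hφ0 z hzK
      linarith
    have hnhds : closure Ω ∈ 𝓝 z := Filter.mem_of_superset (hΩ.mem_nhds hzΩ) subset_closure
    have hlm : IsLocalMax (fun y => u y - φ y) z := hzmax.isLocalMax hnhds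
    -- gradients agree at z
    have hucd : ContDiffAt ℝ 2 u z := hu.contDiffAt (hΩ.mem_nhds hzΩ)
    have hud : DifferentiableAt ℝ u z := hucd.differentiableAt (by norm_num)
    have hφd : DifferentiableAt ℝ φ z := (phi_hasFDerivAt m C hr z).differentiableAt
    have hfd0 : fderiv ℝ (fun y => u y - φ y) z = 0 := hlm.fderiv_eq_zero
    have hfde : fderiv ℝ u z = fderiv ℝ φ z := by
      have := fderiv_fun_sub hud hφd
      rw [hfd0] at this
      exact (sub_eq_zero.1 this.symm)
    have hpd : ∀ i, pd i u z = pd i φ z := fun i => by rw [pd, pd, hfde]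
    have hgeq : gradSq u z = gradSq φ z := by
      rw [gradSq, gradSq]
      exact Finset.sum_congr rfl fun i _ => by rw [hpd i]
    have hglt : gradSq u z < 1 := hsp z hzΩ
    set W := Real.sqrt (1 - gradSq u z) with hW
    have hWpos : 0 < W := Real.sqrt_pos.2 (by linarith)
    -- expansions
    have hexp_u : divMC (-1) u z = lap u z / W + crossTerm u z / W^3 :=
      divMC_expand hΩ hzΩ hu hglt
    have hexp_φ : divMC (-1) φ z = lap φ z / W + crossTerm φ z / W^3 := by
      have := divMC_expand hΩ hzΩ (hφCD.contDiffOn) (by rw [← hgeq]; exact hglt)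
      rwa [← hgeq] at this
    have hdiv_φ : divMC (-1) φ z = -(1/r) := divMC_phi m C ha hr z
    have hdiv_u : divMC (-1) u z = 2 * H := heq z hzΩ
    -- second derivatives of the difference
    have hhCD : ContDiffOn ℝ 2 (fun y => u y - φ y) Ω := hu.sub (hφCD.contDiffOn)
    have hpdsub : ∀ j, pd j (fun y => u y - φ y) z = pd j u z - pd j φ z := by
      intro j
      rw [pd, fderiv_fun_sub hud hφd]
      rfl
    have hA : ∀ i j, pd i (pd j (fun y => u y - φ y)) z
        = pd i (pd j u) z - pd i (pd j φ) z := by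
      intro i j
      have hev : (pd j (fun y => u y - φ y)) =ᶠ[𝓝 z] fun y => pd j u y - pd j φ y := by
        filter_upwards [hΩ.mem_nhds hzΩ] with y hy
        have hudy : DifferentiableAt ℝ u y :=
          (hu.contDiffAt (hΩ.mem_nhds hy)).differentiableAt (by norm_num)
        have hφdy : DifferentiableAt ℝ φ y := (phi_hasFDerivAt m C hr y).differentiableAt
        rw [pd, fderiv_fun_sub hudy hφdy]
        rfl
      have hdju : DifferentiableAt ℝ (pd j u) z := pd_differentiableAt hucd j
      have hdjφ : DifferentiableAt ℝ (pd j φ) z := pd_differentiableAt (hφCD.contDiffAt) j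
      rw [pd, hev.fderiv_eq, fderiv_fun_sub hdju hdjφ]
      rfl
    -- apply max principle in directions
    set M : Fin 2 → Fin 2 → ℝ := fun i j => pd i (pd j (fun y => u y - φ y)) z with hM
    have hqe : ∀ k : Fin 2, M k k ≤ 0 := by
      intro k
      have := q_nonpos hΩ hzΩ hhCD hlm (ee k)
      rwa [q_single M k] at this
    set pvec : E2 := (WithLp.equiv 2 (Fin 2 → ℝ)).symm (fun i => pd i u z) with hpvec
    have hqp : ∑ i, ∑ j, pd i u z * pd j u z * M i j ≤ 0 := by
      have := q_nonpos hΩ hzΩ hhCD hlm pvec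
      have hcoords : ∀ i, pvec i = pd i u z := fun i => rfl
      calc ∑ i, ∑ j, pd i u z * pd j u z * M i j
          = ∑ i, ∑ j, pvec i * pvec j * M i j := by
            exact Finset.sum_congr rfl fun i _ => Finset.sum_congr rfl fun j _ => by
              rw [hcoords i, hcoords j]
        _ ≤ 0 := this
    -- combine
    have hlapd : lap u z - lap φ z = ∑ k, M k k := by
      rw [lap, lap, ← Finset.sum_sub_distrib]
      exact Finset.sum_congr rfl fun k _ => (hA k k).symm
    have hcrossd : crossTerm u z - crossTerm φ z = ∑ i, ∑ j, pd i u z * pd j u z * M i j := by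
      rw [crossTerm, crossTerm]
      rw [← Finset.sum_sub_distrib]
      refine Finset.sum_congr rfl fun i _ => ?_
      rw [← Finset.sum_sub_distrib]
      refine Finset.sum_congr rfl fun j _ => ?_
      have hMij : M i j = pd i (pd j u) z - pd i (pd j φ) z := hA i j
      rw [hMij, ← hpd i, ← hpd j]
      ring
    have hsum2 : ∑ k, M k k ≤ 0 := by
      rw [Fin.sum_univ_two]
      linarith [hqe 0, hqe 1]
    have hfinal : 2 * H + 1/r ≤ 0 := by
      have h1 : 2 * H - (-(1/r)) = (lap u z - lap φ z) / W + (crossTerm u z - crossTerm φ z) / W^3 := by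
        rw [← hdiv_u, ← hdiv_φ, hexp_u, hexp_φ]
        ring
      rw [hlapd, hcrossd] at h1
      have h2 : (∑ k, M k k) / W ≤ 0 := div_nonpos_iff.2 (Or.inr ⟨hsum2, hWpos.le⟩)
      have h3 : (∑ i, ∑ j, pd i u z * pd j u z * M i j) / W^3 ≤ 0 :=
        div_nonpos_iff.2 (Or.inr ⟨hqp, by positivity⟩)
      linarith
    linarith

lemma stripWidths_nonempty {A : Set E2} (hb : Bornology.IsBounded A) :
    (stripWidths A).Nonempty := by
  obtain ⟨R, hR⟩ := hb.subset_closedBall 0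
  set R' := max R 0 with hR'
  have hR'0 : 0 ≤ R' := le_max_right _ _
  refine ⟨2 * R', ⟨by positivity, ee 0, ?_, -R', ?_⟩⟩
  · rw [ee, EuclideanSpace.norm_single]; norm_num
  · intro x hx
    have hx' : ‖x‖ ≤ R' := by
      have := hR hx
      rw [Metric.mem_closedBall, dist_zero_right] at this
      exact le_trans this (le_max_left _ _)
    have hco : |(inner ℝ (ee 0 : E2) x : ℝ)| ≤ ‖x‖ := by
      have h1 := abs_real_inner_le_norm (ee 0 : E2) x
      have hn : ‖(ee 0 : E2)‖ = 1 := by rw [ee, EuclideanSpace.norm_single]; norm_num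
      rw [hn, one_mul] at h1
      exact h1
    rw [abs_le] at hco
    constructor <;> linarith [hco.1, hco.2]

lemma oneSided {Ω : Set E2} (hΩ : IsOpen Ω) (hne : Ω.Nonempty) (hb : Bornology.IsBounded Ω)
    {H : ℝ} (hH : H ≠ 0) {u : E2 → ℝ}
    (hu : ContDiffOn ℝ 2 u Ω) (hc : ContinuousOn u (closure Ω))
    (hsp : ∀ x ∈ Ω, gradSq u x < 1)
    (hbd : ∀ x ∈ frontier Ω, u x = 0)
    (heq : ∀ x ∈ Ω, divMC (-1) u x = 2 * H) :
    ∀ x ∈ Ω, u x ≤ (1 / (2 * |H|)) * (Real.sqrt (1 + Theta Ω ^ 2 * H ^ 2) - 1) := by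
  intro x hx
  have hHabs : 0 < |H| := abs_pos.2 hH
  set r0 : ℝ := 1/(2*|H|) with hr0
  have hr0pos : 0 < r0 := by positivity
  set Θ := Theta Ω with hΘdef
  have hSne : (stripWidths Ω).Nonempty := stripWidths_nonempty hb
  have hΘ0 : 0 ≤ Θ := Real.sInf_nonneg (fun w hw => hw.1)
  have key : ∀ ε ∈ Ioo (0:ℝ) r0, u x ≤ Real.sqrt ((r0-ε)^2 + ((Θ+ε)/2)^2) - (r0-ε) := by
    intro ε hε
    have hsinf : sInf (stripWidths Ω) < Θ + ε := by
      rw [hΘdef, Theta] at *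
      linarith [hε.1]
    obtain ⟨w, hwS, hwlt⟩ := exists_lt_of_csInf_lt hSne hsinf
    obtain ⟨hw0, a, ha, b, hab⟩ := hwS
    have hr : 0 < r0 - ε := by linarith [hε.2]
    have hHr : -(1/(r0-ε)) < 2*H := by
      have h1 : 1/r0 < 1/(r0-ε) := one_div_lt_one_div_of_lt hr (by linarith [hε.1])
      have h2 : 1/r0 = 2*|H| := by rw [hr0, one_div_one_div]
      rcases lt_or_gt_of_ne hH with hneg | hpos
      · have habs : |H| = -H := abs_of_neg hneg
        rw [habs] at h2
        linarith
      · have h3 : 0 < 1/(r0-ε) := by positivity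
        linarith
    have hcomp := comparison hΩ hne hb hu hc hsp hbd heq ha hw0 hab hr hHr x hx
    have hmono : Real.sqrt ((r0-ε)^2 + (w/2)^2) ≤ Real.sqrt ((r0-ε)^2 + ((Θ+ε)/2)^2) := by
      apply Real.sqrt_le_sqrt
      nlinarith [hw0, hwlt, hΘ0, hε.1]
    linarith
  have hcont : ContinuousAt (fun ε : ℝ => Real.sqrt ((r0-ε)^2 + ((Θ+ε)/2)^2) - (r0-ε)) 0 := by
    apply ContinuousAt.sub
    · exact (Real.continuous_sqrt.continuousAt).comp (by fun_prop)
    · fun_prop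
  have hval : Real.sqrt ((r0-0)^2 + ((Θ+0)/2)^2) - (r0-0) = Real.sqrt (r0^2 + (Θ/2)^2) - r0 := by
    norm_num
  have hlim : Filter.Tendsto (fun ε => Real.sqrt ((r0-ε)^2 + ((Θ+ε)/2)^2) - (r0-ε)) (𝓝[>] (0:ℝ))
      (𝓝 (Real.sqrt (r0^2 + (Θ/2)^2) - r0)) := by
    have := hcont.tendsto
    rw [hval] at this
    exact this.mono_left nhdsWithin_le_nhds
  have hfinal : u x ≤ Real.sqrt (r0^2 + (Θ/2)^2) - r0 := by
    refine ge_of_tendsto hlim ?_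
    filter_upwards [Ioo_mem_nhdsGT_of_mem (by constructor <;> [exact le_refl 0; exact hr0pos])]
      with ε hε
    exact key ε hε
  have hH2 : |H|^2 = H^2 := sq_abs H
  have h1 : r0^2 + (Θ/2)^2 = r0^2 * (1 + Θ^2*H^2) := by
    rw [hr0]
    field_simp
    rw [← hH2]
    ring
  have hid : Real.sqrt (r0^2 + (Θ/2)^2) - r0 = r0 * (Real.sqrt (1 + Θ^2*H^2) - 1) := by
    rw [h1, Real.sqrt_mul (sq_nonneg r0), Real.sqrt_sq hr0pos.le]
    ring
  rw [hid] at hfinal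
  exact hfinal

lemma pd_neg (f : E2 → ℝ) (i : Fin 2) (x : E2) :
    pd i (fun y => -f y) x = -pd i f x := by
  rw [pd, pd, fderiv_fun_neg]
  rfl

lemma gradSq_neg (f : E2 → ℝ) (x : E2) : gradSq (fun y => -f y) x = gradSq f x := by
  rw [gradSq, gradSq]
  exact Finset.sum_congr rfl fun i _ => by rw [pd_neg]; ring

lemma divMC_neg (f : E2 → ℝ) (x : E2) :
    divMC (-1) (fun y => -f y) x = -divMC (-1) f x := by
  rw [divMC, divMC, ← Finset.sum_neg_distrib]
  refine Finset.sum_congr rfl fun i _ => ?_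
  have hfun : (fun y => pd i (fun z => -f z) y / Real.sqrt (1 + (-1) * gradSq (fun z => -f z) y))
      = fun y => -(pd i f y / Real.sqrt (1 + (-1) * gradSq f y)) := by
    funext y
    rw [pd_neg, gradSq_neg, neg_div]
  rw [hfun, pd_neg]


/-- Lorentzian height estimate via cylinders: a spacelike solution of
`div(Du/√(1−|Du|²)) = 2H`, `H ≠ 0`, vanishing on `∂Ω`, satisfies
`sup_Ω |u| ≤ (1/(2|H|))(√(1 + Θ(Ω)²H²) − 1)`. -/
theorem statement_11 (Ω : Set E2) (hΩ : IsOpen Ω) (hconn : IsConnected Ω)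
    (hb : Bornology.IsBounded Ω)
    (H : ℝ) (hH : H ≠ 0) (u : E2 → ℝ)
    (hu : ContDiffOn ℝ 2 u Ω) (hc : ContinuousOn u (closure Ω))
    (hsp : ∀ x ∈ Ω, gradSq u x < 1)
    (hbd : ∀ x ∈ frontier Ω, u x = 0)
    (heq : ∀ x ∈ Ω, divMC (-1) u x = 2 * H) :
    ∀ x ∈ Ω, |u x| ≤ (1 / (2 * |H|)) * (Real.sqrt (1 + Theta Ω ^ 2 * H ^ 2) - 1) := by
  intro x hx
  have hne : Ω.Nonempty := hconn.nonempty
  have hup := oneSided hΩ hne hb hH hu hc hsp hbd heq x hx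
  have hneq : ∀ y ∈ Ω, divMC (-1) (fun z => -u z) y = 2 * (-H) := fun y hy => by
    rw [divMC_neg, heq y hy]; ring
  have hlow := oneSided hΩ hne hb (neg_ne_zero.2 hH) (hu.neg) (hc.neg)
    (fun y hy => by rw [gradSq_neg]; exact hsp y hy)
    (fun y hy => by simp [hbd y hy]) hneq x hx
  rw [abs_neg, neg_sq] at hlow
  rw [abs_le]
  exact ⟨by linarith [hlow], hup⟩
end
end
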